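/- The one-state Turing machine M_cc with tape alphabet {⊔, u, U, h, 0, 1, Z, C, B}, halting symbol h, and transition table δ(u)=(U,R), δ(0)=(1,L), δ(U)=(C,R), δ(1)=(Z,R), δ(Z)=(0,L), δ(C)=(B,L), δ(B)=(C,R), δ(⊔)=(⊔,L) halts on input u^n 0^m h if and only if n ≥ 2^m − 1. -/

import Mathlib

inductive Dir : Type
  | L | R
deriving DecidableEq

def Dir.move : Dir → ℤ
  | .L => -1
  | .R => 1

/-- A one-state Turing machine: a blank symbol, a set of halting symbols
(as a Boolean predicate) and a transition function on the tape alphabet. -/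
structure OneStateTM (Γ : Type) where
  blank : Γ
  halt : Γ → Bool
  δ : Γ → Γ × Dir

/-- A configuration: a bi-infinite tape and a head position. -/
structure Cfg (Γ : Type) where
  tape : ℤ → Γ
  pos : ℤ

/-- One step of the machine; `none` means the machine has halted
(the head reads a halting symbol). -/
def OneStateTM.step {Γ : Type} (M : OneStateTM Γ) (c : Cfg Γ) : Option (Cfg Γ) :=
  if M.halt (c.tape c.pos) then none
  else some ⟨Function.update c.tape c.pos (M.δ (c.tape c.pos)).1,
             c.pos + (M.δ (c.tape c.pos)).2.move⟩

/-- Initial tape: the input written in cells 0,…,len−1, blanks elsewhere. -/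
def OneStateTM.initTape {Γ : Type} (M : OneStateTM Γ) (l : List Γ) : ℤ → Γ :=
  fun i => if i < 0 then M.blank else l.getD i.toNat M.blank

/-- The machine halts starting from configuration `c`. -/
def OneStateTM.HaltsFrom {Γ : Type} (M : OneStateTM Γ) (c : Cfg Γ) : Prop :=
  ∃ n : ℕ, (fun o => Option.bind o M.step)^[n] (some c) = none

/-- The machine halts on input `l` (head initially on the leftmost input symbol). -/
def OneStateTM.HaltsOn {Γ : Type} (M : OneStateTM Γ) (l : List Γ) : Prop :=
  M.HaltsFrom ⟨M.initTape l, 0⟩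

/-- The tape alphabet of M_cc: blank, u, U, h, 0, 1, Z, C, B. -/
inductive Tcc : Type
  | blank | u | bigU | h | z0 | one | Z | C | B
deriving DecidableEq

/-- The one-state Turing machine M_cc. -/
def Mcc : OneStateTM Tcc where
  blank := .blank
  halt := fun a => match a with | .h => true | _ => false
  δ := fun a => match a with
    | .u => (.bigU, .R)
    | .z0 => (.one, .L)
    | .bigU => (.C, .R)
    | .one => (.Z, .R)
    | .Z => (.z0, .L)
    | .C => (.B, .L)
    | .B => (.C, .R)
    | .blank => (.blank, .L)
    | .h => (.h, .R)   -- irrelevant: h is halting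

/-- The input u^n 0^m h. -/
def ccInput (n m : ℕ) : List Tcc :=
  List.replicate n .u ++ List.replicate m .z0 ++ [.h]

/-! ### Auxiliary machinery -/

namespace McProof

/-- One step on optional configurations. -/
def F : Option (Cfg Tcc) → Option (Cfg Tcc) := fun o => Option.bind o Mcc.step

lemma F_none (n : ℕ) : F^[n] none = none := by
  induction n with
  | zero => rfl
  | succ n ih => rw [Function.iterate_succ_apply, show F none = none from rfl, ih]

/-- Reachability. -/
def Steps (c c' : Cfg Tcc) : Prop := ∃ k : ℕ, F^[k] (some c) = some c'

lemma steps_refl (c : Cfg Tcc) : Steps c c := ⟨0, rfl⟩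

lemma steps_trans {a b c : Cfg Tcc} (h1 : Steps a b) (h2 : Steps b c) : Steps a c := by
  obtain ⟨k1, h1⟩ := h1; obtain ⟨k2, h2⟩ := h2
  exact ⟨k2 + k1, by rw [Function.iterate_add_apply, h1, h2]⟩

lemma steps_single {a b : Cfg Tcc} (h : Mcc.step a = some b) : Steps a b :=
  ⟨1, by simpa [F] using h⟩

lemma steps_cast {c₁ c₂ d₁ d₂ : Cfg Tcc} (h : Steps c₁ c₂) (e1 : c₁ = d₁) (e2 : c₂ = d₂) :
    Steps d₁ d₂ := e1 ▸ e2 ▸ h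

lemma haltsFrom_def (c : Cfg Tcc) : Mcc.HaltsFrom c ↔ ∃ n, F^[n] (some c) = none :=
  Iff.rfl

lemma halts_iff_of_steps {a b : Cfg Tcc} (h : Steps a b) :
    (Mcc.HaltsFrom a ↔ Mcc.HaltsFrom b) := by
  obtain ⟨k, hk⟩ := h
  rw [haltsFrom_def, haltsFrom_def]
  constructor
  · rintro ⟨n, hn⟩
    rcases le_or_gt n k with hle | hlt
    · exfalso
      have : F^[k] (some a) = none := by
        rw [show k = (k - n) + n by omega, Function.iterate_add_apply, hn, F_none]
      rw [this] at hk; cases hk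
    · refine ⟨n - k, ?_⟩
      rw [← hk, ← Function.iterate_add_apply, show n - k + k = n by omega]
      exact hn
  · rintro ⟨n, hn⟩
    exact ⟨n + k, by rw [Function.iterate_add_apply, hk, hn]⟩

lemma halts_of_steps_none {a b : Cfg Tcc} (h : Steps a b) (hb : Mcc.step b = none) :
    Mcc.HaltsFrom a := by
  rw [halts_iff_of_steps h, haltsFrom_def]
  exact ⟨1, by simpa [F] using hb⟩

/-- Configuration built from a list with head at a given position. -/
def cfg (l : List Tcc) (p : ℤ) : Cfg Tcc := ⟨Mcc.initTape l, p⟩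

lemma cfg_eq {l l' : List Tcc} {p p' : ℤ} (hl : l = l') (hp : p = p') :
    cfg l p = cfg l' p' := by rw [hl, hp]

lemma initTape_nat (l : List Tcc) (p : ℕ) :
    Mcc.initTape l (p : ℤ) = l.getD p .blank := by
  simp [OneStateTM.initTape, Mcc]

lemma halt_eq_false {s : Tcc} (hs : s ≠ .h) : Mcc.halt s = false := by
  cases s <;> simp_all [Mcc]

lemma initTape_set (l : List Tcc) (p : ℕ) (hp : p < l.length) (x : Tcc) :
    Function.update (Mcc.initTape l) (p : ℤ) x = Mcc.initTape (l.set p x) := by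
  funext i
  rcases eq_or_ne i (p : ℤ) with rfl | hne
  · rw [Function.update_self]
    have h0 : ¬ ((p : ℤ) < 0) := by omega
    simp [OneStateTM.initTape, h0, List.getD_eq_getElem?_getD, List.getElem?_set_self hp]
  · rw [Function.update_of_ne hne]
    unfold OneStateTM.initTape
    by_cases hi : i < 0
    · simp [hi]
    · have hi0 : 0 ≤ i := le_of_not_gt hi
      have : i.toNat ≠ p := by omega
      simp [hi, List.getD_eq_getElem?_getD, List.getElem?_set_ne (Ne.symm this)]

lemma step_eq (l : List Tcc) (p : ℕ) (hp : p < l.length) (hnh : l.getD p .blank ≠ .h) :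
    Mcc.step (cfg l (p : ℤ)) =
      some (cfg (l.set p (Mcc.δ (l.getD p .blank)).1)
        ((p : ℤ) + (Mcc.δ (l.getD p .blank)).2.move)) := by
  unfold OneStateTM.step cfg
  simp only [initTape_nat, halt_eq_false hnh, Bool.false_eq_true, if_false,
    initTape_set l p hp]

lemma getD_mid (pre : List Tcc) (x : Tcc) (rest : List Tcc) :
    (pre ++ x :: rest).getD pre.length .blank = x := by
  simp [List.getD_eq_getElem?_getD, List.getElem?_append_right (le_refl pre.length)]

lemma set_mid (pre : List Tcc) (x y : Tcc) (rest : List Tcc) :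
    (pre ++ x :: rest).set pre.length y = pre ++ y :: rest := by
  rw [List.set_append_right _ _ (le_refl pre.length)]
  simp

lemma step_mid (pre : List Tcc) (x : Tcc) (rest : List Tcc) (hx : x ≠ .h) :
    Mcc.step (cfg (pre ++ x :: rest) (pre.length : ℤ)) =
      some (cfg (pre ++ (Mcc.δ x).1 :: rest) ((pre.length : ℤ) + (Mcc.δ x).2.move)) := by
  have hp : pre.length < (pre ++ x :: rest).length := by simp
  rw [step_eq _ _ hp (by rw [getD_mid]; exact hx), getD_mid, set_mid]

lemma steps_mid (pre : List Tcc) (x : Tcc) (rest : List Tcc) (hx : x ≠ .h) :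
    Steps (cfg (pre ++ x :: rest) (pre.length : ℤ))
      (cfg (pre ++ (Mcc.δ x).1 :: rest) ((pre.length : ℤ) + (Mcc.δ x).2.move)) :=
  steps_single (step_mid pre x rest hx)

lemma steps_mid' (pre : List Tcc) (x y : Tcc) (d : Dir) (rest : List Tcc)
    (hx : x ≠ .h) (hd : Mcc.δ x = (y, d)) :
    Steps (cfg (pre ++ x :: rest) (pre.length : ℤ))
      (cfg (pre ++ y :: rest) ((pre.length : ℤ) + d.move)) := by
  have h := steps_mid pre x rest hx
  rw [hd] at h
  exact h

/-- Sweep right through a block of `s`'s, rewriting them to `t`. -/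
lemma rightSweep {s t : Tcc} (hδ : Mcc.δ s = (t, Dir.R)) (hs : s ≠ .h) :
    ∀ (a : ℕ) (pre rest : List Tcc),
      Steps (cfg (pre ++ List.replicate a s ++ rest) (pre.length : ℤ))
        (cfg (pre ++ List.replicate a t ++ rest) ((pre.length : ℤ) + a)) := by
  intro a
  induction a with
  | zero => intro pre rest; simpa using steps_refl _
  | succ n ih =>
    intro pre rest
    have step1 := steps_mid pre s (List.replicate n s ++ rest) hs
    rw [hδ] at step1
    refine steps_trans (steps_cast step1 (cfg_eq ?_ rfl) (cfg_eq ?_ ?_))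
      (steps_cast (ih (pre ++ [t]) rest) rfl (cfg_eq ?_ ?_))
    · simp [List.replicate_succ]
    · simp
    · simp [Dir.move]
    · simp [List.replicate_succ]
    · simp; push_cast; ring
  
/-- Sweep left through a block of `s`'s, rewriting them to `t`. -/
lemma leftSweep {s t : Tcc} (hδ : Mcc.δ s = (t, Dir.L)) (hs : s ≠ .h) :
    ∀ (a : ℕ) (pre rest : List Tcc),
      Steps (cfg (pre ++ List.replicate a s ++ rest) ((pre.length : ℤ) + a - 1))
        (cfg (pre ++ List.replicate a t ++ rest) ((pre.length : ℤ) - 1)) := by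
  intro a
  induction a with
  | zero => intro pre rest; simpa using steps_refl _
  | succ n ih =>
    intro pre rest
    have step1 := steps_mid (pre ++ List.replicate n s) s rest hs
    rw [hδ] at step1
    refine steps_trans (steps_cast step1 (cfg_eq ?_ ?_) (cfg_eq ?_ ?_))
      (steps_cast (ih pre (t :: rest)) rfl (cfg_eq ?_ rfl))
    · simp [List.replicate_succ', List.append_assoc]
    · simp; push_cast; ring
    · simp
    · simp [Dir.move]; push_cast; ring
    · simp [List.replicate_succ', List.append_assoc]

/-! ### Divergence when the head is left of the tape -/

lemma iterate_neg (l : List Tcc) (p : ℤ) (hp : p < 0) :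
    ∀ n : ℕ, F^[n] (some (cfg l p)) = some (cfg l (p - n)) := by
  intro n
  induction n generalizing p with
  | zero => simp
  | succ n ih =>
    rw [Function.iterate_succ_apply]
    have htape : Mcc.initTape l p = .blank := by
      simp [OneStateTM.initTape, hp, Mcc]
    have hupd : Function.update (Mcc.initTape l) p Tcc.blank = Mcc.initTape l := by
      conv_lhs => rw [← htape]
      exact Function.update_eq_self _ _
    have hstep : F (some (cfg l p)) = some (cfg l (p - 1)) := by
      show Mcc.step (cfg l p) = _
      unfold OneStateTM.step cfg
      simp only [htape]
      rw [if_neg (by simp [Mcc])]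
      simp only [show Mcc.δ Tcc.blank = (Tcc.blank, Dir.L) from rfl, hupd]
      have : p + Dir.L.move = p - 1 := by simp only [Dir.move]; omega
      rw [this]
    rw [hstep, ih _ (by omega)]
    congr 1
    apply cfg_eq rfl
    push_cast; ring

lemma not_halts_neg (l : List Tcc) (p : ℤ) (hp : p < 0) :
    ¬ Mcc.HaltsFrom (cfg l p) := by
  rw [haltsFrom_def]
  rintro ⟨n, hn⟩
  rw [iterate_neg l p hp n] at hn
  cases hn

/-! ### The counter -/

/-- Encoding of a bit on the tape. -/
def enc (b : Bool) : Tcc := bif b then .one else .z0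

/-- Number of increments needed to make all bits 1 (little-endian distance to all-ones). -/
def need : List Bool → ℕ
  | [] => 0
  | b :: bs => 2 * need bs + (bif b then 0 else 1)

/-- Checkpoint configuration: tape `U^k C^j bits h`, head at the first bit. -/
def ckpt (k j : ℕ) (bits : List Bool) : Cfg Tcc :=
  cfg (List.replicate k .bigU ++ List.replicate j .C ++ bits.map enc ++ [.h])
    ((k : ℤ) + j)

lemma need_eq_zero {bits : List Bool} (h : need bits = 0) :
    bits.map enc = List.replicate bits.length .one := by
  induction bits with
  | nil => rfl
  | cons b bs ih =>
    rw [need] at h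
    cases b
    · simp [enc] at h
    · simp only [List.map_cons, List.length_cons, List.replicate_succ]
      rw [ih (by omega)]
      rfl

lemma exists_false_of_need_ne {bits : List Bool} (h : need bits ≠ 0) :
    ∃ a rest, bits = List.replicate a true ++ false :: rest := by
  induction bits with
  | nil => simp [need] at h
  | cons b bs ih =>
    cases b
    · exact ⟨0, bs, rfl⟩
    · rw [need] at h
      obtain ⟨a, rest, hr⟩ := ih (by simp at h ⊢; omega)
      exact ⟨a + 1, rest, by rw [List.replicate_succ, hr]; rfl⟩

lemma need_succ (a : ℕ) (rest : List Bool) :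
    need (List.replicate a true ++ false :: rest) =
      need (List.replicate a false ++ true :: rest) + 1 := by
  induction a with
  | zero => simp [need]
  | succ n ih =>
    rw [List.replicate_succ, List.replicate_succ, List.cons_append, List.cons_append,
      need, need, ih]
    simp; ring

/-- Reading `h` halts. -/
lemma step_none_at_h (pre rest : List Tcc) :
    Mcc.step (cfg (pre ++ Tcc.h :: rest) (pre.length : ℤ)) = none := by
  have hcond : Mcc.halt ((cfg (pre ++ Tcc.h :: rest) ((pre.length : ℕ) : ℤ)).tape
      (cfg (pre ++ Tcc.h :: rest) ((pre.length : ℕ) : ℤ)).pos) = true := by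
    show Mcc.halt (Mcc.initTape (pre ++ Tcc.h :: rest) ((pre.length : ℕ) : ℤ)) = true
    rw [initTape_nat, getD_mid]
    rfl
  unfold OneStateTM.step
  rw [if_pos hcond]

/-- Halting when the counter is all ones. -/
lemma halts_allones (k j : ℕ) (bits : List Bool) (h : need bits = 0) :
    Mcc.HaltsFrom (ckpt k j bits) := by
  unfold ckpt
  rw [need_eq_zero h]
  refine halts_of_steps_none ?_
    (step_none_at_h ((List.replicate k Tcc.bigU ++ List.replicate j Tcc.C)
      ++ List.replicate bits.length Tcc.Z) [])
  refine steps_cast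
    (rightSweep (s := Tcc.one) (t := Tcc.Z) rfl (by decide) bits.length
      (List.replicate k Tcc.bigU ++ List.replicate j Tcc.C) [Tcc.h])
    (cfg_eq ?_ ?_) (cfg_eq ?_ ?_)
  · simp [List.append_assoc]
  · simp
  · simp [List.append_assoc]
  · simp [add_assoc]

/-- One full increment pass: from checkpoint down to position k-1 with the C's
turned into B's and the counter incremented. -/
lemma passCommon (k j : ℕ) (bits : List Bool) (h : need bits ≠ 0) :
    ∃ bits', need bits = need bits' + 1 ∧
      Steps (ckpt k j bits)
        (cfg (List.replicate k Tcc.bigU ++ List.replicate j Tcc.B ++ bits'.map enc ++ [Tcc.h])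
          ((k : ℤ) - 1)) := by
  obtain ⟨a, rest, hb⟩ := exists_false_of_need_ne h
  subst hb
  refine ⟨List.replicate a false ++ true :: rest, need_succ a rest, ?_⟩
  have hmap : (List.replicate a true ++ false :: rest).map enc
      = List.replicate a Tcc.one ++ Tcc.z0 :: rest.map enc := by simp [enc]
  have hmap' : (List.replicate a false ++ true :: rest).map enc
      = List.replicate a Tcc.z0 ++ Tcc.one :: rest.map enc := by simp [enc]
  have t1 : Steps (ckpt k j (List.replicate a true ++ false :: rest))
      (cfg ((List.replicate k Tcc.bigU ++ List.replicate j Tcc.C)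
          ++ List.replicate a Tcc.Z ++ (Tcc.z0 :: rest.map enc ++ [Tcc.h]))
        (((k : ℤ) + j) + a)) := by
    refine steps_cast (rightSweep (s := Tcc.one) (t := Tcc.Z) rfl (by decide) a
      (List.replicate k Tcc.bigU ++ List.replicate j Tcc.C)
      (Tcc.z0 :: rest.map enc ++ [Tcc.h])) (cfg_eq ?_ ?_).symm (cfg_eq ?_ ?_)
    · rw [hmap]
      simp [List.append_assoc]
    · simp
    · rfl
    · simp
  have t2 : Steps
      (cfg ((List.replicate k Tcc.bigU ++ List.replicate j Tcc.C)
          ++ List.replicate a Tcc.Z ++ (Tcc.z0 :: rest.map enc ++ [Tcc.h]))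
        (((k : ℤ) + j) + a))
      (cfg ((List.replicate k Tcc.bigU ++ List.replicate j Tcc.C)
          ++ List.replicate a Tcc.Z ++ (Tcc.one :: rest.map enc ++ [Tcc.h]))
        (((k : ℤ) + j) + a - 1)) := by
    refine steps_cast (steps_mid'
      ((List.replicate k Tcc.bigU ++ List.replicate j Tcc.C) ++ List.replicate a Tcc.Z)
      Tcc.z0 Tcc.one Dir.L (rest.map enc ++ [Tcc.h]) (by decide) rfl)
      (cfg_eq ?_ ?_) (cfg_eq ?_ ?_)
    · simp [List.append_assoc]
    · simp [add_assoc]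
    · simp [List.append_assoc]
    · simp only [Dir.move, List.length_append, List.length_replicate]
      push_cast
      ring
  have t3 : Steps
      (cfg ((List.replicate k Tcc.bigU ++ List.replicate j Tcc.C)
          ++ List.replicate a Tcc.Z ++ (Tcc.one :: rest.map enc ++ [Tcc.h]))
        (((k : ℤ) + j) + a - 1))
      (cfg (List.replicate k Tcc.bigU
          ++ List.replicate j Tcc.C
          ++ ((List.replicate a false ++ true :: rest).map enc ++ [Tcc.h]))
        ((k : ℤ) + j - 1)) := by
    refine steps_cast (leftSweep (s := Tcc.Z) (t := Tcc.z0) rfl (by decide) a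
      (List.replicate k Tcc.bigU ++ List.replicate j Tcc.C)
      (Tcc.one :: rest.map enc ++ [Tcc.h])) (cfg_eq ?_ ?_) (cfg_eq ?_ ?_)
    · rfl
    · simp
    · rw [hmap']
      simp [List.append_assoc]
    · simp
  have t4 : Steps
      (cfg (List.replicate k Tcc.bigU
          ++ List.replicate j Tcc.C
          ++ ((List.replicate a false ++ true :: rest).map enc ++ [Tcc.h]))
        ((k : ℤ) + j - 1))
      (cfg (List.replicate k Tcc.bigU ++ List.replicate j Tcc.B
          ++ (List.replicate a false ++ true :: rest).map enc ++ [Tcc.h])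
        ((k : ℤ) - 1)) := by
    refine steps_cast (leftSweep (s := Tcc.C) (t := Tcc.B) rfl (by decide) j
      (List.replicate k Tcc.bigU)
      ((List.replicate a false ++ true :: rest).map enc ++ [Tcc.h]))
      (cfg_eq ?_ ?_) (cfg_eq ?_ ?_)
    · rfl
    · simp
    · simp [List.append_assoc]
    · simp
  exact steps_trans t1 (steps_trans t2 (steps_trans t3 t4))

/-- From a checkpoint with a positive number of `U`s, one increment pass leads to
the next checkpoint. -/
lemma passSucc (k' j : ℕ) (bits' : List Bool) :
    Steps (cfg (List.replicate (k' + 1) Tcc.bigU ++ List.replicate j Tcc.B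
        ++ bits'.map enc ++ [Tcc.h]) (((k' + 1 : ℕ) : ℤ) - 1))
      (ckpt k' (j + 1) bits') := by
  have u1 := steps_mid' (List.replicate k' Tcc.bigU) Tcc.bigU Tcc.C Dir.R
    (List.replicate j Tcc.B ++ (bits'.map enc ++ [Tcc.h])) (by decide) rfl
  have u2 := rightSweep (s := Tcc.B) (t := Tcc.C) rfl (by decide) j
    (List.replicate k' Tcc.bigU ++ [Tcc.C]) (bits'.map enc ++ [Tcc.h])
  refine steps_trans (steps_cast u1 (cfg_eq ?_ ?_) (cfg_eq ?_ ?_))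
    (steps_cast u2 rfl (cfg_eq ?_ ?_))
  · simp [List.replicate_succ', List.append_assoc]
  · simp only [List.length_replicate]
    push_cast
    ring
  · simp [List.append_assoc]
  · simp only [Dir.move, List.length_append, List.length_replicate, List.length_cons,
      List.length_nil]
    push_cast
    ring
  · simp [List.replicate_succ, List.append_assoc]
  · simp only [List.length_append, List.length_replicate, List.length_cons,
      List.length_nil]
    push_cast
    ring

/-- Main invariant: a checkpoint halts iff there are at least `need bits` many `U`s. -/
lemma halts_ckpt (k : ℕ) : ∀ (j : ℕ) (bits : List Bool),
    Mcc.HaltsFrom (ckpt k j bits) ↔ need bits ≤ k := by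
  induction k with
  | zero =>
    intro j bits
    rcases eq_or_ne (need bits) 0 with h0 | h0
    · exact iff_of_true (halts_allones _ _ _ h0) (by omega)
    · obtain ⟨bits', hneed, hsteps⟩ := passCommon 0 j bits h0
      rw [halts_iff_of_steps hsteps]
      exact iff_of_false (not_halts_neg _ _ (by norm_num)) (by omega)
  | succ k' IH =>
    intro j bits
    rcases eq_or_ne (need bits) 0 with h0 | h0
    · exact iff_of_true (halts_allones _ _ _ h0) (by omega)
    · obtain ⟨bits', hneed, hsteps⟩ := passCommon (k' + 1) j bits h0
      rw [halts_iff_of_steps (steps_trans hsteps (passSucc k' j bits')),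
        IH (j + 1) bits']
      omega

lemma need_replicate_false (m : ℕ) : need (List.replicate m false) + 1 = 2 ^ m := by
  induction m with
  | zero => rfl
  | succ m ih =>
    rw [List.replicate_succ, need, pow_succ]
    simp only [cond_false]
    omega

end McProof



/-- M_cc halts on input u^n 0^m h iff n >= 2^m - 1. -/
theorem Mcc_halts_iff : ∀ n m : ℕ, Mcc.HaltsOn (ccInput n m) ↔ 2 ^ m - 1 ≤ n := by
  intro n m
  have hinit : Mcc.HaltsOn (ccInput n m) ↔
      Mcc.HaltsFrom (McProof.ckpt n 0 (List.replicate m false)) := by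
    apply McProof.halts_iff_of_steps
    refine McProof.steps_cast
      (McProof.rightSweep (s := Tcc.u) (t := Tcc.bigU) rfl (by decide) n []
        (List.replicate m Tcc.z0 ++ [Tcc.h]))
      (McProof.cfg_eq ?_ ?_) (McProof.cfg_eq ?_ ?_)
    · simp [ccInput, List.append_assoc]
    · simp
    · simp [McProof.enc]
    · simp
  rw [hinit, McProof.halts_ckpt n 0 (List.replicate m false)]
  have h2 := McProof.need_replicate_false m
  omega
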